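/- Let F, G, H be finite groups, U a subgroup of F × G, and V a subgroup of G × H. Then |Γ(U,V)| = |Γ∩(U,V)| · |U * V|. -/
import Mathlib


open scoped Pointwise

section StarPrelude

variable {F G H I : Type*} [Group F] [Group G] [Group H] [Group I]
variable {A : Type*} [CommGroup A]

/-- The star product of subgroups `U ≤ F × G` and `V ≤ G × H`. -/
def starProd (U : Subgroup (F × G)) (V : Subgroup (G × H)) : Subgroup (F × H) where
  carrier := {p | ∃ g : G, (p.1, g) ∈ U ∧ (g, p.2) ∈ V}
  one_mem' := ⟨1, U.one_mem, V.one_mem⟩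
  mul_mem' := by
    rintro ⟨a, b⟩ ⟨c, d⟩ ⟨g, h1, h2⟩ ⟨g', h1', h2'⟩
    exact ⟨g * g', U.mul_mem h1 h1', V.mul_mem h2 h2'⟩
  inv_mem' := by
    rintro ⟨a, b⟩ ⟨g, h1, h2⟩
    exact ⟨g⁻¹, U.inv_mem h1, V.inv_mem h2⟩

infixl:70 " ⋆ " => starProd

theorem mem_starProd {U : Subgroup (F × G)} {V : Subgroup (G × H)} {p : F × H} :
    p ∈ U ⋆ V ↔ ∃ g : G, (p.1, g) ∈ U ∧ (g, p.2) ∈ V := Iff.rfl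

/-- `Γ(U,V) = {(f,g,h) : (f,g) ∈ U, (g,h) ∈ V}`. -/
def gammaSet (U : Subgroup (F × G)) (V : Subgroup (G × H)) : Set (F × G × H) :=
  {p | (p.1, p.2.1) ∈ U ∧ (p.2.1, p.2.2) ∈ V}

/-- `Γ∩(U,V) = {g ∈ G : (1,g) ∈ U and (g,1) ∈ V}`. -/
def gammaCap (U : Subgroup (F × G)) (V : Subgroup (G × H)) : Set G :=
  {g | ((1 : F), g) ∈ U ∧ (g, (1 : H)) ∈ V}

/-- `p₁(U)`, the image of `U ≤ F × G` in `F`. -/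
def proj1 (U : Subgroup (F × G)) : Subgroup F := U.map (MonoidHom.fst F G)

/-- `p₂(U)`, the image of `U ≤ F × G` in `G`. -/
def proj2 (U : Subgroup (F × G)) : Subgroup G := U.map (MonoidHom.snd F G)

/-- `k₁(U) = {f : (f,1) ∈ U}`. -/
def ker1 (U : Subgroup (F × G)) : Set F := {f | (f, (1 : G)) ∈ U}

/-- `k₂(U) = {g : (1,g) ∈ U}`. -/
def ker2 (U : Subgroup (F × G)) : Set G := {g | ((1 : F), g) ∈ U}

end StarPrelude


section Aux
variable {F G H : Type*} [Group F] [Group G] [Group H]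

/-- `Γ(U,V)` as a subgroup of `F × G × H`. -/
def gammaSub (U : Subgroup (F × G)) (V : Subgroup (G × H)) : Subgroup (F × G × H) where
  carrier := gammaSet U V
  one_mem' := ⟨U.one_mem, V.one_mem⟩
  mul_mem' := by
    rintro ⟨a, b, c⟩ ⟨d, e, f⟩ ⟨h1, h2⟩ ⟨h3, h4⟩
    exact ⟨U.mul_mem h1 h3, V.mul_mem h2 h4⟩
  inv_mem' := by
    rintro ⟨a, b, c⟩ ⟨h1, h2⟩
    exact ⟨U.inv_mem h1, V.inv_mem h2⟩

end Aux

/-- For finite groups `F, G, H` and subgroups `U ≤ F × G`, `V ≤ G × H`: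
`|Γ(U,V)| = |Γ∩(U,V)| · |U * V|`. -/
theorem stmt2 {F G H : Type*} [Group F] [Group G] [Group H]
    [Finite F] [Finite G] [Finite H]
    (U : Subgroup (F × G)) (V : Subgroup (G × H)) :
    Nat.card (gammaSet U V) = Nat.card (gammaCap U V) * Nat.card (U ⋆ V) := by
  classical
  set Γ := gammaSub U V
  have hset : Nat.card (gammaSet U V) = Nat.card Γ := rfl
  -- the homomorphism (f,g,h) ↦ (f,h) restricted to Γ
  let ψ : (F × G × H) →* (F × H) :=
    (MonoidHom.fst F (G × H)).prod ((MonoidHom.snd G H).comp (MonoidHom.snd F (G × H)))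
  let φ : Γ →* (F × H) := ψ.comp Γ.subtype
  have hcard : Nat.card Γ = Nat.card (Γ ⧸ φ.ker) * Nat.card φ.ker :=
    Subgroup.card_eq_card_quotient_mul_card_subgroup φ.ker
  have hquot : Nat.card (Γ ⧸ φ.ker) = Nat.card φ.range :=
    Nat.card_congr (QuotientGroup.quotientKerEquivRange φ).toEquiv
  have hrange : φ.range = U ⋆ V := by
    ext ⟨f, h⟩
    constructor
    · rintro ⟨⟨⟨a, b, c⟩, hu, hv⟩, heq⟩
      rw [← heq]
      exact ⟨b, hu, hv⟩
    · rintro ⟨g, hu, hv⟩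
      exact ⟨⟨(f, g, h), hu, hv⟩, rfl⟩
  have hker : Nat.card φ.ker = Nat.card (gammaCap U V) := by
    refine Nat.card_congr
      ⟨fun x => ⟨x.1.1.2.1, ?_⟩, fun g => ⟨⟨(1, g.1, 1), g.2.1, g.2.2⟩, rfl⟩, ?_, ?_⟩
    · obtain ⟨⟨⟨a, b, c⟩, hu, hv⟩, hx⟩ := x
      have h1 : a = 1 := congrArg Prod.fst hx
      have h2 : c = 1 := congrArg Prod.snd hx
      subst h1; subst h2
      exact ⟨hu, hv⟩
    · rintro ⟨⟨⟨a, b, c⟩, hu, hv⟩, hx⟩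
      have h1 : a = 1 := congrArg Prod.fst hx
      have h2 : c = 1 := congrArg Prod.snd hx
      subst h1; subst h2
      rfl
    · rintro ⟨g, hg⟩
      rfl
  rw [hset, hcard, hquot, hrange, hker, Nat.mul_comm]
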